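/- Let f: ℝⁿ → ℝᵐ be measurable and suppose that for every x outside a countable set N₀, ap-limsup_{y→x} |f(y)-f(x)|/|y-x| < ∞. Then f satisfies Luzin's N-property with respect to the Hausdorff measure H^s for every s ∈ (0, n]: if E ⊆ ℝⁿ with H^s(E) = 0, then H^s(f(E)) = 0. -/

import Mathlib

open MeasureTheory Metric Filter Set

noncomputable section

/-- `ℝⁿ` as a Euclidean space. -/
abbrev Ec (n : ℕ) := EuclideanSpace ℝ (Fin n)

/-- The set `A` has vanishing Lebesgue density at `x`. -/
def apSmall {n : ℕ} (x : Ec n) (A : Set (Ec n)) : Prop :=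
  Tendsto (fun r : ℝ => volume (A ∩ ball x r) / volume (ball x r))
    (nhdsWithin 0 (Ioi 0)) (nhds 0)

/-- `f` is approximately differentiable of order `k` at `x`, with Taylor polynomial
`y ↦ ∑_{j ≤ k} (p j) (y-x)^j = p.partialSum (k+1) (y-x)` (here the coefficient maps `p j`
already incorporate the factor `1/j!`): the approximate limit of
`|f y - p_k(x;y)|/|y-x|^k` as `y → x` is `0`. -/
def IsApproxTaylor {n m : ℕ} (f : Ec n → Ec m) (k : ℕ) (x : Ec n)
    (p : FormalMultilinearSeries ℝ (Ec n) (Ec m)) : Prop :=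
  ∀ ε > (0 : ℝ),
    apSmall x {y | y ≠ x ∧ ε * ‖y - x‖ ^ k ≤ ‖f y - p.partialSum (k + 1) (y - x)‖}

open scoped ENNReal NNReal

namespace LuzinAux

/-- The "bad set" of points `y` near `x` where `f` oscillates a lot. -/
def Bad {n m : ℕ} (f : Ec n → Ec m) (q : ℝ) (x : Ec n) : Set (Ec n) :=
  {y | y ≠ x ∧ q * ‖y - x‖ ≤ ‖f y - f x‖}

/-- A small constant depending on the dimension. -/
def cN (n : ℕ) : ℝ≥0∞ := ((2 : ℝ≥0∞) ^ (n + 2))⁻¹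

/-- Points where the bad set has uniformly small relative measure at scales below `1/(j+1)`. -/
def G {n m : ℕ} (f : Ec n → Ec m) (q j : ℕ) : Set (Ec n) :=
  {x | ∀ r : ℝ, 0 < r → r ≤ 1 / (j + 1) →
    volume (Bad f q x ∩ ball x r) ≤ cN n * volume (ball x r)}

lemma cN_pos (n : ℕ) : 0 < cN n := by
  rw [cN, ENNReal.inv_pos]
  exact ENNReal.pow_ne_top ENNReal.ofNat_ne_top

lemma cN_mul_pow_add (n : ℕ) : cN n * 2 ^ n + cN n < 1 := by
  have hpow0 : ((2 : ℝ≥0∞) ^ n) ≠ 0 := pow_ne_zero _ (by norm_num)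
  have hpowt : ((2 : ℝ≥0∞) ^ n) ≠ ⊤ := ENNReal.pow_ne_top ENNReal.ofNat_ne_top
  have e1 : cN n * 2 ^ n = ((2 : ℝ≥0∞) ^ 2)⁻¹ := by
    rw [cN, pow_add, ENNReal.mul_inv (Or.inl hpow0) (Or.inl hpowt),
      mul_comm (((2 : ℝ≥0∞) ^ n)⁻¹) _, mul_assoc, ENNReal.inv_mul_cancel hpow0 hpowt, mul_one]
  have e2 : cN n ≤ ((2 : ℝ≥0∞) ^ 2)⁻¹ := by
    rw [cN]
    exact ENNReal.inv_le_inv.2 (pow_le_pow_right₀ one_le_two (by omega))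
  calc cN n * 2 ^ n + cN n ≤ ((2 : ℝ≥0∞) ^ 2)⁻¹ + ((2 : ℝ≥0∞) ^ 2)⁻¹ := add_le_add e1.le e2
    _ = 2⁻¹ := by
        rw [← two_mul, pow_two, ENNReal.mul_inv (Or.inl (by norm_num)) (Or.inl (by norm_num)),
          ← mul_assoc, ENNReal.mul_inv_cancel (by norm_num) (by norm_num), one_mul]
    _ < 1 := by simp [ENNReal.inv_lt_one]

/-- Doubling for balls in `ℝⁿ`. -/
lemma ball_two_mul {n : ℕ} (hn : 0 < n) (x y : Ec n) {r : ℝ} (hr : 0 < r) :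
    volume (ball x (2 * r)) = 2 ^ n * volume (ball y r) := by
  haveI : Nonempty (Fin n) := ⟨⟨0, hn⟩⟩
  rw [Measure.addHaar_ball_mul_of_pos volume x two_pos r,
    Measure.addHaar_ball_center volume y, finrank_euclideanSpace_fin]
  norm_num [ENNReal.ofReal_pow]

/-- From `apSmall` we get membership in some `G f q j`. -/
lemma mem_G {n m : ℕ} {f : Ec n → Ec m} {x : Ec n} {lam : ℝ}
    (hx : apSmall x (Bad f lam x)) : ∃ q j : ℕ, x ∈ G f q j := by
  obtain ⟨q, hq⟩ := exists_nat_ge lam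
  have hsub : Bad f q x ⊆ Bad f lam x := by
    rintro y ⟨h1, h2⟩
    exact ⟨h1, le_trans (mul_le_mul_of_nonneg_right hq (norm_nonneg _)) h2⟩
  have hev : ∀ᶠ r in nhdsWithin 0 (Ioi 0),
      volume (Bad f lam x ∩ ball x r) / volume (ball x r) < cN n :=
    hx.eventually (gt_mem_nhds (cN_pos n))
  rw [eventually_nhdsWithin_iff, Metric.eventually_nhds_iff] at hev
  obtain ⟨δ, δpos, hδ⟩ := hev
  obtain ⟨j, hj⟩ := exists_nat_one_div_lt δpos
  refine ⟨q, j, fun r hr hr' => ?_⟩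
  have hrδ : dist r 0 < δ := by
    rw [Real.dist_eq, sub_zero, abs_of_pos hr]
    exact lt_of_le_of_lt hr' hj
  have hlt := hδ hrδ hr
  have hb0 : volume (ball x r) ≠ 0 := (measure_ball_pos _ _ hr).ne'
  have hbt : volume (ball x r) ≠ ⊤ := measure_ball_lt_top.ne
  have := (ENNReal.div_lt_iff (Or.inl hb0) (Or.inl hbt)).1 hlt
  exact le_trans (measure_mono (inter_subset_inter_left _ hsub)) this.le


/-- The key Lipschitz estimate on `G f q j` at small scales. -/
lemma key {n m : ℕ} (hn : 0 < n) {f : Ec n → Ec m} {q j : ℕ} {x y : Ec n}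
    (hx : x ∈ G f q j) (hy : y ∈ G f q j) (hd : dist x y ≤ 1 / (2 * (j + 1))) :
    dist (f x) (f y) ≤ 3 * q * dist x y := by
  haveI : Nonempty (Fin n) := ⟨⟨0, hn⟩⟩
  rcases eq_or_ne x y with rfl | hxy
  · simp
  set ρ := dist x y with hρ
  have hρ0 : 0 < ρ := dist_pos.2 hxy
  have hj1 : (0:ℝ) < (j:ℝ) + 1 := by positivity
  have hd' : ρ * (2 * ((j:ℝ) + 1)) ≤ 1 := by
    rw [le_div_iff₀ (by positivity : (0:ℝ) < 2 * ((j:ℝ)+1))] at hd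
    exact hd
  have hρδ : ρ ≤ 1 / ((j:ℝ) + 1) := by rw [le_div_iff₀ hj1]; nlinarith
  have h2ρδ : 2 * ρ ≤ 1 / ((j:ℝ) + 1) := by rw [le_div_iff₀ hj1]; nlinarith
  set B := ball y ρ with hB
  have hball : ball y ρ ⊆ ball x (2 * ρ) := by
    intro z hz
    have h1 : dist z x ≤ dist z y + dist y x := dist_triangle _ _ _
    have hzy : dist z y < ρ := mem_ball.1 hz
    rw [dist_comm y x] at h1
    exact mem_ball.2 (by rw [hρ] at *; linarith)
  have hv0 : volume B ≠ 0 := (measure_ball_pos _ _ hρ0).ne'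
  have hvt : volume B ≠ ⊤ := measure_ball_lt_top.ne
  have Vx : volume (Bad f q x ∩ B) ≤ cN n * 2 ^ n * volume B := by
    calc volume (Bad f q x ∩ B) ≤ volume (Bad f q x ∩ ball x (2 * ρ)) :=
          measure_mono (inter_subset_inter_right _ hball)
      _ ≤ cN n * volume (ball x (2 * ρ)) := hx _ (by linarith) h2ρδ
      _ = cN n * 2 ^ n * volume B := by rw [ball_two_mul hn x y hρ0, mul_assoc]
  have Vy : volume (Bad f q y ∩ B) ≤ cN n * volume B := hy _ hρ0 hρδ
  haveI : Nontrivial (Ec n) := inferInstance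
  have hnotcover : ¬ (B ⊆ Bad f q x ∪ Bad f q y ∪ {x} ∪ {y}) := by
    intro hcov
    have hsub : B ⊆ (Bad f q x ∩ B) ∪ ((Bad f q y ∩ B) ∪ ({x} ∪ {y})) := by
      intro z hz
      rcases hcov hz with (((h1 | h2) | h3) | h4)
      · exact Or.inl ⟨h1, hz⟩
      · exact Or.inr (Or.inl ⟨h2, hz⟩)
      · exact Or.inr (Or.inr (Or.inl h3))
      · exact Or.inr (Or.inr (Or.inr h4))
    have hle : volume B ≤ volume (Bad f q x ∩ B) + (volume (Bad f q y ∩ B)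
        + (volume ({x} : Set (Ec n)) + volume ({y} : Set (Ec n)))) := by
      refine (measure_mono hsub).trans ?_
      refine (measure_union_le _ _).trans (add_le_add_right ?_ _)
      refine (measure_union_le _ _).trans (add_le_add_right ?_ _)
      exact measure_union_le _ _
    rw [measure_singleton, measure_singleton, add_zero, add_zero] at hle
    have hlt : volume (Bad f q x ∩ B) + volume (Bad f q y ∩ B) < volume B := by
      calc volume (Bad f q x ∩ B) + volume (Bad f q y ∩ B)
          ≤ cN n * 2 ^ n * volume B + cN n * volume B := add_le_add Vx Vy
        _ = (cN n * 2 ^ n + cN n) * volume B := by ring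
        _ < 1 * volume B := by
            exact ENNReal.mul_lt_mul_left hv0 hvt (cN_mul_pow_add n)
        _ = volume B := one_mul _
    exact absurd hle (not_le.2 hlt)
  obtain ⟨z, hzB, hz⟩ := not_subset.1 hnotcover
  simp only [mem_union, mem_singleton_iff, not_or] at hz
  obtain ⟨⟨⟨hz1, hz2⟩, hz3⟩, hz4⟩ := hz
  have hz1' : ‖f z - f x‖ < q * ‖z - x‖ :=
    not_le.1 fun hcon => hz1 ⟨hz3, hcon⟩
  have hz2' : ‖f z - f y‖ < q * ‖z - y‖ :=
    not_le.1 fun hcon => hz2 ⟨hz4, hcon⟩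
  have hzy : dist z y < ρ := mem_ball.1 hzB
  have hzx : dist z x < 2 * ρ := mem_ball.1 (hball hzB)
  have e1 : ‖f z - f x‖ = dist (f z) (f x) := (dist_eq_norm _ _).symm
  have e2 : ‖f z - f y‖ = dist (f z) (f y) := (dist_eq_norm _ _).symm
  have e3 : ‖z - x‖ = dist z x := (dist_eq_norm _ _).symm
  have e4 : ‖z - y‖ = dist z y := (dist_eq_norm _ _).symm
  rw [e1, e3] at hz1'
  rw [e2, e4] at hz2'
  have htri : dist (f x) (f y) ≤ dist (f z) (f x) + dist (f z) (f y) := by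
    rw [dist_comm (f z) (f x)]
    exact dist_triangle _ _ _
  have hq0 : (0:ℝ) ≤ q := Nat.cast_nonneg q
  nlinarith [mul_le_mul_of_nonneg_left hzx.le hq0, mul_le_mul_of_nonneg_left hzy.le hq0]

end LuzinAux

theorem luzin_N_property {n m : ℕ} (f : Ec n → Ec m) (hf : Measurable f)
    (N₀ : Set (Ec n)) (hN₀ : N₀.Countable)
    (h : ∀ x ∉ N₀, ∃ lam : ℝ,
      apSmall x {y | y ≠ x ∧ lam * ‖y - x‖ ≤ ‖f y - f x‖}) :
    ∀ s : ℝ, 0 < s → s ≤ n →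
      ∀ E : Set (Ec n), μH[s] E = 0 → μH[s] (f '' E) = 0 := by
  intro s hs hsn E hE
  have hn : 0 < n := by
    have : (0:ℝ) < (n:ℝ) := lt_of_lt_of_le hs hsn
    exact_mod_cast this
  haveI : Nonempty (Fin n) := ⟨⟨0, hn⟩⟩
  haveI := Measure.noAtoms_hausdorff (Ec m) hs
  set D : ℕ → Ec n := TopologicalSpace.denseSeq (Ec n) with hD
  set P : ℕ → ℕ → ℕ → Set (Ec n) := fun q j d =>
    E ∩ (LuzinAux.G f q j ∩ closedBall (D d) (1 / (4 * (j + 1)))) with hP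
  have cover : f '' E ⊆ f '' (E ∩ N₀) ∪ ⋃ (q : ℕ) (j : ℕ) (d : ℕ), f '' (P q j d) := by
    rintro _ ⟨x, hxE, rfl⟩
    by_cases hxN : x ∈ N₀
    · exact Or.inl ⟨x, ⟨hxE, hxN⟩, rfl⟩
    · obtain ⟨lam, hlam⟩ := h x hxN
      obtain ⟨q, j, hG⟩ := LuzinAux.mem_G (f := f) hlam
      have hpos : (0:ℝ) < 1 / (4 * ((j:ℝ) + 1)) := by positivity
      obtain ⟨d, hd⟩ := (TopologicalSpace.denseRange_denseSeq (Ec n)).exists_dist_lt x hpos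
      refine Or.inr (mem_iUnion.2 ⟨q, mem_iUnion.2 ⟨j, mem_iUnion.2 ⟨d, ⟨x, ⟨hxE, hG, ?_⟩, rfl⟩⟩⟩⟩)
      exact mem_closedBall.2 hd.le
  refine le_antisymm ?_ (zero_le)
  refine le_trans (measure_mono cover) ?_
  refine le_trans (measure_union_le _ _) ?_
  have h1 : μH[s] (f '' (E ∩ N₀)) = 0 :=
    Set.Countable.measure_zero ((hN₀.mono inter_subset_right).image f) _
  have h2 : μH[s] (⋃ (q : ℕ) (j : ℕ) (d : ℕ), f '' (P q j d)) = 0 := by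
    refine measure_iUnion_null fun q => measure_iUnion_null fun j =>
      measure_iUnion_null fun d => ?_
    have hlip : LipschitzOnWith ((3 * q : ℕ) : ℝ≥0) f (P q j d) := by
      rw [lipschitzOnWith_iff_dist_le_mul]
      intro a ha b hb
      have hj1 : (0:ℝ) < (j:ℝ) + 1 := by positivity
      have hdist : dist a b ≤ 1 / (2 * ((j:ℝ) + 1)) := by
        have ha' := mem_closedBall.1 ha.2.2
        have hb' := mem_closedBall.1 hb.2.2
        have htri : dist a b ≤ dist a (D d) + dist b (D d) := by
          calc dist a b ≤ dist a (D d) + dist (D d) b := dist_triangle _ _ _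
            _ = dist a (D d) + dist b (D d) := by rw [dist_comm (D d) b]
        have heq : 1 / (4 * ((j:ℝ)+1)) + 1 / (4 * ((j:ℝ)+1)) = 1 / (2 * ((j:ℝ)+1)) := by
          field_simp
          ring
        linarith
      calc dist (f a) (f b) ≤ 3 * (q:ℝ) * dist a b :=
            LuzinAux.key hn ha.2.1 hb.2.1 hdist
        _ = ((3 * q : ℕ) : ℝ≥0) * dist a b := by push_cast; ring
    have hle : μH[s] (f '' (P q j d)) ≤ (((3 * q : ℕ) : ℝ≥0) : ℝ≥0∞) ^ s * μH[s] (P q j d) :=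
      hlip.hausdorffMeasure_image_le hs.le
    have hP0 : μH[s] (P q j d) = 0 :=
      le_antisymm (hE ▸ measure_mono inter_subset_left) (zero_le)
    rw [hP0, mul_zero] at hle
    exact le_antisymm hle (zero_le)
  simp [h1, h2]

end
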